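/- Let I ⊂ ℚ[S,T] be the ideal generated by (T−1)(T²−1), (S−1)(S²−1), and (S−T)(T−1), and let R₂ = ℚ[S,T]/I. Then the images of 1, S, S², T, T² form a basis of R₂ as a ℚ-vector space (so dim_ℚ R₂ = 5), and the images of S and T are units of R₂, with S·(−S² + S + 1) = 1 and T·(−T² + T + 1) = 1. -/

import Mathlib

set_option maxHeartbeats 1000000
set_option synthInstance.maxHeartbeats 100000


/-!
STATEMENT 14: Let `R₂ = ℚ[S,T]/⟨(T-1)(T²-1), (S-1)(S²-1), (S-T)(T-1)⟩`.
Then the images of `1, S, S², T, T²` form a ℚ-basis of `R₂` (so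
`dim_ℚ R₂ = 5`), and the images of `S` and `T` are units, with
`S·(-S² + S + 1) = 1` and `T·(-T² + T + 1) = 1`.
-/

open MvPolynomial

/-- The defining ideal of the virtual K-theory of `ℙ(1,2)`:
`⟨(T-1)(T²-1), (S-1)(S²-1), (S-T)(T-1)⟩ ⊆ ℚ[S,T]`, with `S = X 0`, `T = X 1`. -/
noncomputable def virtIdeal2 : Ideal (MvPolynomial (Fin 2) ℚ) :=
  Ideal.span
    {(X 1 - 1) * ((X 1) ^ 2 - 1),
     (X 0 - 1) * ((X 0) ^ 2 - 1),
     (X 0 - X 1) * (X 1 - 1)}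

/-- `R₂ = ℚ[S,T]/⟨(T-1)(T²-1), (S-1)(S²-1), (S-T)(T-1)⟩`. -/
abbrev VirtK2 : Type := MvPolynomial (Fin 2) ℚ ⧸ virtIdeal2

/-- The image of `S` in `R₂`. -/
noncomputable def sElt : VirtK2 := Ideal.Quotient.mk virtIdeal2 (X 0)

/-- The image of `T` in `R₂`. -/
noncomputable def tElt : VirtK2 := Ideal.Quotient.mk virtIdeal2 (X 1)

section Aux

open TrivSqZeroExt

private lemma mk_gen1 : Ideal.Quotient.mk virtIdeal2 ((X 1 - 1) * ((X 1) ^ 2 - 1)) = 0 :=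
  Ideal.Quotient.eq_zero_iff_mem.mpr (Ideal.subset_span (by simp))

private lemma mk_gen2 : Ideal.Quotient.mk virtIdeal2 ((X 0 - 1) * ((X 0) ^ 2 - 1)) = 0 :=
  Ideal.Quotient.eq_zero_iff_mem.mpr (Ideal.subset_span (by simp))

private lemma mk_gen3 : Ideal.Quotient.mk virtIdeal2 ((X 0 - X 1) * (X 1 - 1)) = 0 :=
  Ideal.Quotient.eq_zero_iff_mem.mpr (Ideal.subset_span (by simp))

private lemma hS3 : sElt ^ 3 = sElt ^ 2 + sElt - 1 := by
  have h := mk_gen2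
  rw [show ((X 0 - 1) * ((X 0) ^ 2 - 1) : MvPolynomial (Fin 2) ℚ)
      = (X 0) ^ 3 - (X 0) ^ 2 - X 0 + 1 by ring] at h
  simp only [map_add, map_sub, map_pow, map_one] at h
  have h2 : sElt ^ 3 - sElt ^ 2 - sElt + 1 = 0 := h
  linear_combination h2

private lemma hT3 : tElt ^ 3 = tElt ^ 2 + tElt - 1 := by
  have h := mk_gen1
  rw [show ((X 1 - 1) * ((X 1) ^ 2 - 1) : MvPolynomial (Fin 2) ℚ)
      = (X 1) ^ 3 - (X 1) ^ 2 - X 1 + 1 by ring] at h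
  simp only [map_add, map_sub, map_pow, map_one] at h
  have h2 : tElt ^ 3 - tElt ^ 2 - tElt + 1 = 0 := h
  linear_combination h2

private lemma hST : sElt * tElt = sElt + tElt ^ 2 - tElt := by
  have h := mk_gen3
  rw [show ((X 0 - X 1) * (X 1 - 1) : MvPolynomial (Fin 2) ℚ)
      = X 0 * X 1 - X 0 - (X 1) ^ 2 + X 1 by ring] at h
  simp only [map_add, map_sub, map_pow, map_mul] at h
  have h2 : sElt * tElt - sElt - tElt ^ 2 + tElt = 0 := h
  linear_combination h2

private lemma hST2 : sElt * tElt ^ 2 = sElt + tElt ^ 2 - 1 := by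
  linear_combination (tElt + 1) * hST + hT3

private lemma hS2T : sElt ^ 2 * tElt = sElt ^ 2 + tElt - 1 := by
  linear_combination (sElt - 1) * hST + hST2

/-- evaluation at a point of the variety -/
private noncomputable def evQ (a b : ℚ)
    (h1 : (b-1)*(b^2-1) = 0) (h2 : (a-1)*(a^2-1) = 0) (h3 : (a-b)*(b-1) = 0) :
    VirtK2 →ₐ[ℚ] ℚ :=
  Ideal.Quotient.liftₐ virtIdeal2 (aeval ![a, b]) (by
    intro p hp
    refine Submodule.span_induction ?_ ?_ ?_ ?_ hp
    · rintro q hq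
      simp only [Set.mem_insert_iff, Set.mem_singleton_iff] at hq
      rcases hq with rfl | rfl | rfl <;> simp [h1, h2, h3]
    · simp
    · intro x y _ _ hx hy; rw [map_add, hx, hy, add_zero]
    · intro a x _ hx
      rw [smul_eq_mul, map_mul, hx, mul_zero])

@[simp] private lemma evQ_s (a b : ℚ) (h1 : (b-1)*(b^2-1) = 0) (h2 : (a-1)*(a^2-1) = 0)
    (h3 : (a-b)*(b-1) = 0) : evQ a b h1 h2 h3 sElt = a := by
  simp [evQ, sElt, Ideal.Quotient.liftₐ_apply, Ideal.Quotient.lift_mk]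

@[simp] private lemma evQ_t (a b : ℚ) (h1 : (b-1)*(b^2-1) = 0) (h2 : (a-1)*(a^2-1) = 0)
    (h3 : (a-b)*(b-1) = 0) : evQ a b h1 h2 h3 tElt = b := by
  simp [evQ, tElt, Ideal.Quotient.liftₐ_apply, Ideal.Quotient.lift_mk]

/-- first-order jet in the `S` direction at `(1,1)` -/
private noncomputable def jS : VirtK2 →ₐ[ℚ] (DualNumber ℚ) :=
  Ideal.Quotient.liftₐ virtIdeal2 (aeval ![1 + DualNumber.eps, 1]) (by
    intro p hp
    refine Submodule.span_induction ?_ ?_ ?_ ?_ hp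
    · rintro q hq
      simp only [Set.mem_insert_iff, Set.mem_singleton_iff] at hq
      have he : (DualNumber.eps * DualNumber.eps : DualNumber ℚ) = 0 :=
        DualNumber.eps_mul_eps
      rcases hq with rfl | rfl | rfl <;>
          simp only [map_mul, map_sub, map_pow, map_one, map_add, aeval_X,
            Matrix.cons_val_zero, Matrix.cons_val_one, Matrix.head_cons]
      · ring
      · linear_combination (DualNumber.eps + 2) * he
      · ring
    · simp
    · intro x y _ _ hx hy; simp [hx, hy]
    · intro a x _ hx
      rw [smul_eq_mul, map_mul, hx, mul_zero])

@[simp] private lemma jS_s : jS sElt = 1 + DualNumber.eps := by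
  show aeval (R := ℚ) (![1 + DualNumber.eps, 1] : Fin 2 → DualNumber ℚ) (X 0) = _
  simp

@[simp] private lemma jS_t : jS tElt = 1 := by
  show aeval (R := ℚ) (![1 + DualNumber.eps, 1] : Fin 2 → DualNumber ℚ) (X 1) = _
  simp

/-- first-order jet in the `T` direction at `(1,1)` -/
private noncomputable def jT : VirtK2 →ₐ[ℚ] (DualNumber ℚ) :=
  Ideal.Quotient.liftₐ virtIdeal2 (aeval ![1, 1 + DualNumber.eps]) (by
    intro p hp
    refine Submodule.span_induction ?_ ?_ ?_ ?_ hp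
    · rintro q hq
      simp only [Set.mem_insert_iff, Set.mem_singleton_iff] at hq
      have he : (DualNumber.eps * DualNumber.eps : DualNumber ℚ) = 0 :=
        DualNumber.eps_mul_eps
      rcases hq with rfl | rfl | rfl <;>
          simp only [map_mul, map_sub, map_pow, map_one, map_add, aeval_X,
            Matrix.cons_val_zero, Matrix.cons_val_one, Matrix.head_cons]
      · linear_combination (DualNumber.eps + 2) * he
      · ring
      · linear_combination -he
    · simp
    · intro x y _ _ hx hy; simp [hx, hy]
    · intro a x _ hx
      rw [smul_eq_mul, map_mul, hx, mul_zero])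

@[simp] private lemma jT_s : jT sElt = 1 := by
  show aeval (R := ℚ) (![1, 1 + DualNumber.eps] : Fin 2 → DualNumber ℚ) (X 0) = _
  simp

@[simp] private lemma jT_t : jT tElt = 1 + DualNumber.eps := by
  show aeval (R := ℚ) (![1, 1 + DualNumber.eps] : Fin 2 → DualNumber ℚ) (X 1) = _
  simp

private lemma sq_one_eps : ((1 + DualNumber.eps : DualNumber ℚ)) ^ 2
    = 1 + (DualNumber.eps + DualNumber.eps) := by
  have he : (DualNumber.eps * DualNumber.eps : DualNumber ℚ) = 0 :=
    DualNumber.eps_mul_eps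
  linear_combination he

private lemma li5 :
    LinearIndependent ℚ ![(1 : VirtK2), sElt, sElt ^ 2, tElt, tElt ^ 2] := by
  rw [Fintype.linearIndependent_iff]
  intro g hg
  rw [Fin.sum_univ_five] at hg
  simp only [Matrix.cons_val_zero, Matrix.cons_val_one, Matrix.head_cons,
    Matrix.cons_val_two, Matrix.tail_cons, Matrix.cons_val_three,
    Matrix.cons_val_four] at hg
  -- evaluation at (-1, 1)
  have e1 := congrArg (evQ (-1) 1 (by norm_num) (by norm_num) (by norm_num)) hg
  simp only [map_add, map_smul, map_pow, map_one, map_zero, evQ_s, evQ_t,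
    smul_eq_mul] at e1
  -- evaluation at (-1, -1)
  have e2 := congrArg (evQ (-1) (-1) (by norm_num) (by norm_num) (by norm_num)) hg
  simp only [map_add, map_smul, map_pow, map_one, map_zero, evQ_s, evQ_t,
    smul_eq_mul] at e2
  -- jets
  have e3 := congrArg jS hg
  simp only [map_add, map_smul, map_pow, map_one, map_zero, jS_s, jS_t,
    sq_one_eps] at e3
  have e3f := congrArg TrivSqZeroExt.fst e3
  have e3s := congrArg TrivSqZeroExt.snd e3
  simp only [TrivSqZeroExt.fst_add, TrivSqZeroExt.snd_add, TrivSqZeroExt.fst_smul,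
    TrivSqZeroExt.snd_smul, TrivSqZeroExt.fst_one, TrivSqZeroExt.snd_one,
    TrivSqZeroExt.fst_mul, TrivSqZeroExt.snd_mul, DualNumber.fst_eps,
    DualNumber.snd_eps, TrivSqZeroExt.fst_zero, TrivSqZeroExt.snd_zero,
    one_pow, smul_eq_mul, smul_zero, smul_add] at e3f e3s
  have e4 := congrArg jT hg
  simp only [map_add, map_smul, map_pow, map_one, map_zero, jT_s, jT_t,
    sq_one_eps] at e4
  have e4f := congrArg TrivSqZeroExt.fst e4
  have e4s := congrArg TrivSqZeroExt.snd e4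
  simp only [TrivSqZeroExt.fst_add, TrivSqZeroExt.snd_add, TrivSqZeroExt.fst_smul,
    TrivSqZeroExt.snd_smul, TrivSqZeroExt.fst_one, TrivSqZeroExt.snd_one,
    TrivSqZeroExt.fst_mul, TrivSqZeroExt.snd_mul, DualNumber.fst_eps,
    DualNumber.snd_eps, TrivSqZeroExt.fst_zero, TrivSqZeroExt.snd_zero,
    one_pow, smul_eq_mul, smul_zero, smul_add] at e4f e4s
  norm_num at e1 e2 e3f e3s e4f e4s
  have h0 : g 0 = 0 := by linarith
  have h1 : g 1 = 0 := by linarith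
  have h2 : g 2 = 0 := by linarith
  have h3 : g 3 = 0 := by linarith
  have h4 : g 4 = 0 := by linarith
  intro i
  fin_cases i
  · exact h0
  · exact h1
  · exact h2
  · exact h3
  · exact h4

private lemma span5 :
    Submodule.span ℚ ({1, sElt, sElt ^ 2, tElt, tElt ^ 2} : Set VirtK2) = ⊤ := by
  set P := Submodule.span ℚ ({1, sElt, sElt ^ 2, tElt, tElt ^ 2} : Set VirtK2) with hP
  have h1 : (1 : VirtK2) ∈ P := Submodule.subset_span (Set.mem_insert _ _)
  have hs : sElt ∈ P := Submodule.subset_span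
    (Set.mem_insert_of_mem _ (Set.mem_insert _ _))
  have hs2 : sElt ^ 2 ∈ P := Submodule.subset_span
    (Set.mem_insert_of_mem _ (Set.mem_insert_of_mem _ (Set.mem_insert _ _)))
  have ht : tElt ∈ P := Submodule.subset_span
    (Set.mem_insert_of_mem _ (Set.mem_insert_of_mem _ (Set.mem_insert_of_mem _
      (Set.mem_insert _ _))))
  have ht2 : tElt ^ 2 ∈ P := Submodule.subset_span
    (Set.mem_insert_of_mem _ (Set.mem_insert_of_mem _ (Set.mem_insert_of_mem _
      (Set.mem_insert_of_mem _ rfl))))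
  -- closure of P under multiplication by sElt and tElt
  have mulS : ∀ x ∈ P, x * sElt ∈ P := by
    intro x hx
    refine Submodule.span_induction ?_ ?_ ?_ ?_ hx
    · rintro y hy
      simp only [Set.mem_insert_iff, Set.mem_singleton_iff] at hy
      rcases hy with rfl | rfl | rfl | rfl | rfl
      · simpa using hs
      · rw [show sElt * sElt = sElt ^ 2 by ring]; exact hs2
      · rw [show sElt ^ 2 * sElt = sElt ^ 3 by ring, hS3]
        exact P.sub_mem (P.add_mem hs2 hs) h1
      · rw [mul_comm, hST]
        exact P.sub_mem (P.add_mem hs ht2) ht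
      · rw [mul_comm, hST2]
        exact P.sub_mem (P.add_mem hs ht2) h1
    · simp
    · intro y z _ _ hy hz
      rw [add_mul]; exact P.add_mem hy hz
    · intro c y _ hy
      rw [smul_mul_assoc]; exact P.smul_mem c hy
  have mulT : ∀ x ∈ P, x * tElt ∈ P := by
    intro x hx
    refine Submodule.span_induction ?_ ?_ ?_ ?_ hx
    · rintro y hy
      simp only [Set.mem_insert_iff, Set.mem_singleton_iff] at hy
      rcases hy with rfl | rfl | rfl | rfl | rfl
      · simpa using ht
      · rw [hST]
        exact P.sub_mem (P.add_mem hs ht2) ht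
      · rw [hS2T]
        exact P.sub_mem (P.add_mem hs2 ht) h1
      · rw [show tElt * tElt = tElt ^ 2 by ring]; exact ht2
      · rw [show tElt ^ 2 * tElt = tElt ^ 3 by ring, hT3]
        exact P.sub_mem (P.add_mem ht2 ht) h1
    · simp
    · intro y z _ _ hy hz
      rw [add_mul]; exact P.add_mem hy hz
    · intro c y _ hy
      rw [smul_mul_assoc]; exact P.smul_mem c hy
  rw [eq_top_iff]
  rintro x -
  obtain ⟨p, rfl⟩ := Ideal.Quotient.mk_surjective x
  induction p using MvPolynomial.induction_on with
  | C a =>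
      have hca : (Ideal.Quotient.mk virtIdeal2) (C a) = algebraMap ℚ VirtK2 a := rfl
      rw [hca, Algebra.algebraMap_eq_smul_one]
      exact P.smul_mem a h1
  | add p q hp hq =>
      rw [map_add]; exact P.add_mem hp hq
  | mul_X p i hp =>
      rw [map_mul]
      fin_cases i
      · exact mulS _ hp
      · exact mulT _ hp

end Aux

theorem virtual_Ktheory_P12_basis_and_units :
    LinearIndependent ℚ ![(1 : VirtK2), sElt, sElt ^ 2, tElt, tElt ^ 2] ∧
    Submodule.span ℚ {(1 : VirtK2), sElt, sElt ^ 2, tElt, tElt ^ 2} = ⊤ ∧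
    Module.finrank ℚ VirtK2 = 5 ∧
    IsUnit sElt ∧ IsUnit tElt ∧
    sElt * (-sElt ^ 2 + sElt + 1) = 1 ∧
    tElt * (-tElt ^ 2 + tElt + 1) = 1 := by
  have hsu : sElt * (-sElt ^ 2 + sElt + 1) = 1 := by linear_combination -hS3
  have htu : tElt * (-tElt ^ 2 + tElt + 1) = 1 := by linear_combination -hT3
  have hrange : Set.range ![(1 : VirtK2), sElt, sElt ^ 2, tElt, tElt ^ 2]
      = ({1, sElt, sElt ^ 2, tElt, tElt ^ 2} : Set VirtK2) := by
    simp only [Matrix.range_cons, Matrix.range_empty, Set.union_empty,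
      Set.singleton_union]
  have hb : Module.finrank ℚ VirtK2 = 5 := by
    let b : Module.Basis (Fin 5) ℚ VirtK2 :=
      Module.Basis.mk li5 (by rw [hrange, span5])
    simpa using Module.finrank_eq_card_basis b
  exact ⟨li5, span5, hb,
    IsUnit.of_mul_eq_one _ hsu, IsUnit.of_mul_eq_one _ htu, hsu, htu⟩
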